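/- Let g₁,…,gₙ be impartial game positions. The emperor sum E(g₁,…,gₙ) is a P-position if and only if every gᵢ is a P-position and Pl(g₁) ⊕ Pl(g₂) ⊕ ⋯ ⊕ Pl(gₙ) = 0, where ⊕ is bitwise XOR. -/

import Mathlib

universe u

/-- N-positions of an impartial game with move relation `r`:
`g` is an N-position iff some option of `g` is a P-position
(i.e. all of whose options are again N-positions). -/
inductive NPos {α : Type u} (r : α → α → Prop) : α → Prop
  | intro (g g' : α) (hm : r g g') (hp : ∀ x, r g' x → NPos r x) : NPos r g

/-- P-position: every option is an N-position (terminal positions are P-positions). -/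
def PPos {α : Type u} (r : α → α → Prop) (g : α) : Prop :=
  ∀ g', r g g' → NPos r g'

/-- The P-position length: `0` for terminal positions, and otherwise
`sup {Pl g' + 1 | g' a P-position strictly following g}` (with `sSup ∅ = 0`). -/
noncomputable def Pl {α : Type u} (r : α → α → Prop)
    (h : WellFounded (Function.swap r)) : α → ℕ :=
  h.transGen.fix fun _g ih =>
    sSup {m | ∃ g', ∃ hg : Relation.TransGen (Function.swap r) g' _g,
      PPos r g' ∧ m = ih g' hg + 1}

/-- Simplicial nim move on the complex `Δ`: choose a nonempty face `F ∈ Δ` and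
remove a positive number of stones from every vertex of `F`. -/
def SNimMove {n : ℕ} (Δ : Set (Finset (Fin n))) (a b : Fin n → ℕ) : Prop :=
  ∃ F ∈ Δ, F.Nonempty ∧ (∀ v ∈ F, b v < a v) ∧ ∀ v ∉ F, b v = a v

/-- Simplicial emperor sum move: choose a face `F ∈ Δ`, replace each component on a
vertex of `F` by a strict follower, each other component by itself or an option,
with at least one component changed. -/
def SEmpMove {n : ℕ} {α : Fin n → Type u} (Δ : Set (Finset (Fin n)))
    (r : ∀ i, α i → α i → Prop) (G G' : ∀ i, α i) : Prop :=
  ∃ F ∈ Δ, (∀ i ∈ F, Relation.TransGen (r i) (G i) (G' i)) ∧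
    (∀ i ∉ F, G' i = G i ∨ r i (G i) (G' i)) ∧ G' ≠ G

/-- Emperor sum move: choose one index `i`, replace `G i` by a strict follower,
and every other component by itself or one of its options. -/
def EmpMove {n : ℕ} {α : Fin n → Type u} (r : ∀ i, α i → α i → Prop)
    (G G' : ∀ i, α i) : Prop :=
  ∃ i, Relation.TransGen (r i) (G i) (G' i) ∧
    ∀ j, j ≠ i → (G' j = G j ∨ r j (G j) (G' j))

section Single

variable {α : Type u} {r : α → α → Prop}

theorem nPos_iff_not_pPos (hw : WellFounded (Function.swap r)) (g : α) : NPos r g ↔ ¬ PPos r g := by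
  refine WellFounded.induction hw (C := fun g => NPos r g ↔ ¬ PPos r g) g ?_
  intro g ih
  constructor
  · rintro ⟨_, g', hm, hp⟩ hP
    exact ((ih g' hm).mp (hP g' hm)) hp
  · intro hP
    simp only [PPos, not_forall] at hP
    obtain ⟨g', hm, hn⟩ := hP
    have hpg' : PPos r g' := by
      by_contra h
      exact hn ((ih g' hm).mpr h)
    exact ⟨g, g', hm, hpg'⟩

/-- The set over which `Pl g` is a supremum. -/
def PlSet (hw : WellFounded (Function.swap r)) (g : α) : Set ℕ :=
  {m | ∃ g', ∃ _ : Relation.TransGen (Function.swap r) g' g,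
      PPos r g' ∧ m = Pl r hw g' + 1}

theorem Pl_eq (hw : WellFounded (Function.swap r)) (g : α) : Pl r hw g = sSup (PlSet hw g) :=
  WellFounded.fix_eq _ _ _

theorem mem_plSet (hw : WellFounded (Function.swap r)) {m : ℕ} {g : α} :
    m ∈ PlSet hw g ↔ ∃ g', Relation.TransGen r g g' ∧ PPos r g' ∧ m = Pl r hw g' + 1 := by
  simp only [PlSet, Set.mem_setOf_eq, Relation.transGen_swap, exists_prop]

theorem plSet_bddAbove (hw : WellFounded (Function.swap r)) (hfin : ∀ x : α, {y | Relation.TransGen r x y}.Finite) (g : α) :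
    BddAbove (PlSet hw g) := by
  apply Set.Finite.bddAbove
  apply Set.Finite.subset ((hfin g).image fun y => Pl r hw y + 1)
  intro m hm
  obtain ⟨g', h1, _, h3⟩ := (mem_plSet hw).mp hm
  exact ⟨g', h1, h3.symm⟩

theorem Pl_lt (hw : WellFounded (Function.swap r)) (hfin : ∀ x : α, {y | Relation.TransGen r x y}.Finite)
    {g g' : α} (h' : Relation.TransGen r g g') (hp : PPos r g') :
    Pl r hw g' < Pl r hw g := by
  have hmem : Pl r hw g' + 1 ∈ PlSet hw g := (mem_plSet hw).mpr ⟨g', h', hp, rfl⟩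
  have := le_csSup (plSet_bddAbove hw hfin g) hmem
  rw [← Pl_eq] at this
  omega

theorem reach_of_lt (hw : WellFounded (Function.swap r)) (hfin : ∀ x : α, {y | Relation.TransGen r x y}.Finite) :
    ∀ g : α, ∀ t, t < Pl r hw g →
    ∃ g', Relation.TransGen r g g' ∧ PPos r g' ∧ Pl r hw g' = t := by
  intro g
  refine WellFounded.induction hw.transGen
    (C := fun g => ∀ t, t < Pl r hw g →
      ∃ g', Relation.TransGen r g g' ∧ PPos r g' ∧ Pl r hw g' = t) g ?_
  intro g ih t ht
  rw [Pl_eq] at ht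
  have hne : (PlSet hw g).Nonempty := by
    rcases Set.eq_empty_or_nonempty (PlSet hw g) with h | h
    · rw [h] at ht; simp at ht
    · exact h
  obtain ⟨g₁, hg₁, hp₁, heq⟩ := (mem_plSet hw).mp (Nat.sSup_mem hne (plSet_bddAbove hw hfin g))
  rw [heq] at ht
  rcases eq_or_lt_of_le (Nat.lt_succ_iff.mp ht) with h | h
  · exact ⟨g₁, hg₁, hp₁, h.symm⟩
  · obtain ⟨g₂, h2, hp2, hPl⟩ := ih g₁ (Relation.transGen_swap.mpr hg₁) t h
    exact ⟨g₂, hg₁.trans h2, hp2, hPl⟩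

theorem exists_max_popt (hw : WellFounded (Function.swap r)) (hfin : ∀ x : α, {y | Relation.TransGen r x y}.Finite)
    {g : α} (hn : NPos r g) :
    ∃ p, r g p ∧ PPos r p ∧ ∀ q, r g q → PPos r q → Pl r hw q ≤ Pl r hw p := by
  have hne : {m | ∃ p, r g p ∧ PPos r p ∧ Pl r hw p = m}.Nonempty := by
    obtain ⟨_, p, hm, hp⟩ := hn
    exact ⟨Pl r hw p, p, hm, hp, rfl⟩
  have hbdd : BddAbove {m | ∃ p, r g p ∧ PPos r p ∧ Pl r hw p = m} := by
    apply Set.Finite.bddAbove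
    apply Set.Finite.subset ((hfin g).image fun y => Pl r hw y)
    rintro m ⟨p, h1, _, h3⟩
    exact ⟨p, Relation.TransGen.single h1, h3⟩
  obtain ⟨p, hp1, hp2, hp3⟩ := Nat.sSup_mem hne hbdd
  refine ⟨p, hp1, hp2, fun q hq hqP => ?_⟩
  rw [hp3]
  exact le_csSup hbdd ⟨q, hq, hqP, rfl⟩

end Single

universe v

section WF


/-- The "product decrease" relation: every component weakly decreases and the
tuple changes. -/
theorem pidec_wf : ∀ (n : ℕ) (α : Fin n → Type v) (s : ∀ i, α i → α i → Prop),
    (∀ i, WellFounded (s i)) →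
    WellFounded (fun G' G : ∀ i, α i =>
      (∀ j, G' j = G j ∨ s j (G' j) (G j)) ∧ G' ≠ G) := by
  intro n
  induction n with
  | zero =>
    intro α s _
    constructor
    intro G
    constructor
    intro G' h
    exact absurd (funext fun i => i.elim0) h.2
  | succ n IH =>
    intro α s hs
    have hwl : WellFounded (Prod.Lex (s 0)
        (fun G' G : ∀ k : Fin n, α k.succ =>
          (∀ j, G' j = G j ∨ s j.succ (G' j) (G j)) ∧ G' ≠ G)) :=
      (hs 0).prod_lex (IH (fun k => α k.succ) (fun k => s k.succ) (fun k => hs k.succ))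
    have hwi := InvImage.wf
      (fun G : ∀ i : Fin (n+1), α i => ((G 0, fun k : Fin n => G k.succ) :
        α 0 × (∀ k : Fin n, α k.succ))) hwl
    refine Subrelation.wf ?_ hwi
    rintro G' G ⟨hall, hne⟩
    rcases hall 0 with h0 | h0
    · have htail : (fun k : Fin n => G' k.succ) ≠ (fun k : Fin n => G k.succ) := by
        intro hteq
        apply hne
        funext j
        refine Fin.cases h0 ?_ j
        intro k
        exact congrFun hteq k
      show Prod.Lex _ _ (G' 0, fun k : Fin n => G' k.succ)
          (G 0, fun k : Fin n => G k.succ)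
      rw [h0]
      exact Prod.Lex.right (G 0) ⟨fun j => hall j.succ, htail⟩
    · exact Prod.Lex.left _ _ h0

theorem empMove_swap_wf {n : ℕ} {α : Fin n → Type v} (r : ∀ i, α i → α i → Prop)
    (hwf : ∀ i, WellFounded (Function.swap (r i))) :
    WellFounded (Function.swap (EmpMove r)) := by
  refine Subrelation.wf ?_
    (pidec_wf n α (fun i => Relation.TransGen (Function.swap (r i)))
      (fun i => (hwf i).transGen))
  rintro G' G ⟨i, ht, hst⟩
  constructor
  · intro j
    by_cases hj : j = i
    · subst hj
      exact Or.inr (Relation.transGen_swap.mpr ht)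
    · rcases hst j hj with h | h
      · exact Or.inl h
      · exact Or.inr (Relation.transGen_swap.mpr (Relation.TransGen.single h))
  · intro heq
    subst heq
    exact (hwf i).transGen.asymmetric _ _ (Relation.transGen_swap.mpr ht)
      (Relation.transGen_swap.mpr ht)

end WF


section Fold

/-- Fold of XOR over `List.ofFn` changes predictably when one entry changes. -/
theorem foldr_xor_eq_of_eq_off : ∀ {n : ℕ} (v w : Fin n → ℕ) (i : Fin n),
    (∀ j, j ≠ i → w j = v j) →
    (List.ofFn w).foldr (· ^^^ ·) 0 =
      (List.ofFn v).foldr (· ^^^ ·) 0 ^^^ v i ^^^ w i := by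
  intro n
  induction n with
  | zero => exact fun _ _ i => i.elim0
  | succ n IH =>
    intro v w i h
    rw [List.ofFn_succ, List.ofFn_succ, List.foldr_cons, List.foldr_cons]
    revert h
    refine Fin.cases ?_ ?_ i
    · intro h
      have htail : (fun k : Fin n => w k.succ) = fun k => v k.succ :=
        funext fun k => h k.succ (Fin.succ_ne_zero k)
      rw [htail, Nat.xor_comm (v 0), Nat.xor_assoc _ (v 0) (v 0), Nat.xor_self, Nat.xor_zero,
        Nat.xor_comm]
    · intro k h
      have h0 : w 0 = v 0 := h 0 (Fin.succ_ne_zero k).symm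
      have ht := IH (fun j => v j.succ) (fun j => w j.succ) k
        (fun j hj => h j.succ (fun hc => hj (Fin.succ_injective n hc)))
      rw [ht, h0]
      simp only [Nat.xor_assoc]

theorem testBit_foldr_xor {b : ℕ} : ∀ l : List ℕ,
    (l.foldr (· ^^^ ·) 0).testBit b = true → ∃ a ∈ l, a.testBit b = true := by
  intro l
  induction l with
  | nil => simp
  | cons a l IH =>
    rw [List.foldr_cons, Nat.testBit_xor]
    intro hx
    by_cases ha : a.testBit b = true
    · exact ⟨a, List.mem_cons_self, ha⟩
    · rw [Bool.not_eq_true] at ha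
      rw [ha] at hx
      simp at hx
      obtain ⟨c, hc, hcb⟩ := IH hx
      exact ⟨c, List.mem_cons_of_mem a hc, hcb⟩

/-- If the xor of a tuple is nonzero, some entry drops when xored with it. -/
theorem exists_xor_lt {n : ℕ} (v : Fin n → ℕ)
    (hx : (List.ofFn v).foldr (· ^^^ ·) 0 ≠ 0) :
    ∃ i, (List.ofFn v).foldr (· ^^^ ·) 0 ^^^ v i < v i := by
  set x := (List.ofFn v).foldr (· ^^^ ·) 0 with hxdef
  obtain ⟨b, hb, hb'⟩ := Nat.exists_most_significant_bit hx
  obtain ⟨a, ha, hab⟩ := testBit_foldr_xor (b := b) _ hb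
  obtain ⟨i, rfl⟩ := List.mem_ofFn.mp ha
  refine ⟨i, Nat.lt_of_testBit b ?_ hab ?_⟩
  · rw [Nat.testBit_xor, hb, hab]
    rfl
  · intro j hj
    rw [Nat.testBit_xor, hb' j hj]
    simp

end Fold

section Emp

variable {n : ℕ} {α : Fin n → Type u} {r : ∀ i, α i → α i → Prop}

theorem emp_step_not_C (hwf : ∀ i, WellFounded (Function.swap (r i)))
    (hfin : ∀ i, ∀ x : α i, {y | Relation.TransGen (r i) x y}.Finite)
    {G G' : ∀ i, α i}
    (hP : ∀ i, PPos (r i) (G i))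
    (hx : (List.ofFn fun i => Pl (r i) (hwf i) (G i)).foldr (· ^^^ ·) 0 = 0)
    (hm : EmpMove r G G') :
    ¬((∀ i, PPos (r i) (G' i)) ∧
      (List.ofFn fun i => Pl (r i) (hwf i) (G' i)).foldr (· ^^^ ·) 0 = 0) := by
  rintro ⟨hP', hx'⟩
  obtain ⟨i, hti, hstep⟩ := hm
  have heq : ∀ j, j ≠ i → Pl (r j) (hwf j) (G' j) = Pl (r j) (hwf j) (G j) := by
    intro j hj
    rcases hstep j hj with h | h
    · rw [h]
    · exact absurd (hP' j) ((nPos_iff_not_pPos (hwf j) (G' j)).mp (hP j (G' j) h))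
  have hfold := foldr_xor_eq_of_eq_off (fun j => Pl (r j) (hwf j) (G j))
    (fun j => Pl (r j) (hwf j) (G' j)) i heq
  rw [hx, hx', Nat.zero_xor] at hfold
  have h2 : Pl (r i) (hwf i) (G i) = Pl (r i) (hwf i) (G' i) :=
    xor_eq_zero_iff.mp hfold.symm
  have h3 := Pl_lt (hwf i) (hfin i) hti (hP' i)
  omega

theorem emp_exists_step (hwf : ∀ i, WellFounded (Function.swap (r i)))
    (hfin : ∀ i, ∀ x : α i, {y | Relation.TransGen (r i) x y}.Finite)
    {G : ∀ i, α i}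
    (hC : ¬((∀ i, PPos (r i) (G i)) ∧
      (List.ofFn fun i => Pl (r i) (hwf i) (G i)).foldr (· ^^^ ·) 0 = 0)) :
    ∃ G', EmpMove r G G' ∧ (∀ i, PPos (r i) (G' i)) ∧
      (List.ofFn fun i => Pl (r i) (hwf i) (G' i)).foldr (· ^^^ ·) 0 = 0 := by
  classical
  have key : ∀ j, ¬ PPos (r j) (G j) →
      ∃ p, r j (G j) p ∧ PPos (r j) p ∧ ∀ q, r j (G j) q → PPos (r j) q →
        Pl (r j) (hwf j) q ≤ Pl (r j) (hwf j) p := by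
    intro j hj
    exact exists_max_popt (hwf j) (hfin j)
      ((nPos_iff_not_pPos (hwf j) (G j)).mpr hj)
  choose p hp1 hp2 hp3 using key
  have hBdef : ∀ j, ∃ b : α j, (PPos (r j) (G j) → b = G j) ∧
      (∀ h : ¬ PPos (r j) (G j), b = p j h) := by
    intro j
    by_cases h : PPos (r j) (G j)
    · exact ⟨G j, fun _ => rfl, fun h' => absurd h h'⟩
    · exact ⟨p j h, fun h' => absurd h' h, fun h' => rfl⟩
  choose B hB1 hB2 using hBdef
  have hBP : ∀ j, PPos (r j) (B j) := by
    intro j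
    by_cases h : PPos (r j) (G j)
    · rw [hB1 j h]; exact h
    · rw [hB2 j h]; exact hp2 j h
  have hBstep : ∀ j, B j = G j ∨ r j (G j) (B j) := by
    intro j
    by_cases h : PPos (r j) (G j)
    · exact Or.inl (hB1 j h)
    · rw [hB2 j h]; exact Or.inr (hp1 j h)
  set v : Fin n → ℕ := fun j => Pl (r j) (hwf j) (B j) with hv
  set x := (List.ofFn v).foldr (· ^^^ ·) 0 with hx
  by_cases hx0 : x = 0
  · have hex : ∃ i, ¬ PPos (r i) (G i) := by
      by_contra hall
      push_neg at hall
      apply hC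
      refine ⟨hall, ?_⟩
      have hGB : (fun i => Pl (r i) (hwf i) (G i)) = v := by
        funext j
        rw [hv, ← hB1 j (hall j)]
      rw [hGB, ← hx]
      exact hx0
    obtain ⟨i, hi⟩ := hex
    have hBi : B i = p i hi := hB2 i hi
    refine ⟨B, ⟨i, Relation.TransGen.single ?_, fun j _ => hBstep j⟩, hBP, ?_⟩
    · rw [hBi]; exact hp1 i hi
    · rw [← hx]; exact hx0
  · obtain ⟨i, hlt⟩ := exists_xor_lt v hx0
    rw [← hx] at hlt
    have hreach : ∃ g', Relation.TransGen (r i) (G i) g' ∧ PPos (r i) g' ∧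
        Pl (r i) (hwf i) g' = x ^^^ v i := by
      by_cases h : PPos (r i) (G i)
      · have hvi : v i = Pl (r i) (hwf i) (G i) := by
          show Pl (r i) (hwf i) (B i) = _
          rw [hB1 i h]
        exact reach_of_lt (hwf i) (hfin i) (G i) (x ^^^ v i) (hvi ▸ hlt)
      · have hvi : v i = Pl (r i) (hwf i) (p i h) := by
          show Pl (r i) (hwf i) (B i) = _
          rw [hB2 i h]
        obtain ⟨q, hq1, hq2, hq3⟩ :=
          reach_of_lt (hwf i) (hfin i) (p i h) (x ^^^ v i) (hvi ▸ hlt)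
        exact ⟨q, Relation.TransGen.head (hp1 i h) hq1, hq2, hq3⟩
    obtain ⟨g', hg1, hg2, hg3⟩ := hreach
    refine ⟨Function.update B i g', ⟨i, ?_, fun j hj => ?_⟩, fun j => ?_, ?_⟩
    · rw [Function.update_self]; exact hg1
    · rw [Function.update_of_ne hj]; exact hBstep j
    · by_cases hj : j = i
      · subst hj; rw [Function.update_self]; exact hg2
      · rw [Function.update_of_ne hj]; exact hBP j
    · have hfold := foldr_xor_eq_of_eq_off v
        (fun j => Pl (r j) (hwf j) (Function.update B i g' j)) i
        (fun j hj => by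
          show Pl (r j) (hwf j) (Function.update B i g' j) = v j
          rw [Function.update_of_ne hj])
      simp only [Function.update_self] at hfold
      rw [hfold, ← hx, hg3, Nat.xor_self]

end Emp

/-- Emperor sum theorem: `E(g₁, …, gₙ)` is a P-position iff every `gᵢ` is a
P-position and the XOR of the P-position lengths is `0`. -/
theorem empSum_PPos_iff (n : ℕ) (α : Fin n → Type u)
    (r : ∀ i, α i → α i → Prop)
    (hwf : ∀ i, WellFounded (Function.swap (r i)))
    (hfin : ∀ i, ∀ x : α i, {y | Relation.TransGen (r i) x y}.Finite)
    (G : ∀ i, α i) :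
    PPos (EmpMove r) G ↔
      (∀ i, PPos (r i) (G i)) ∧
        (List.ofFn fun i => Pl (r i) (hwf i) (G i)).foldr (· ^^^ ·) 0 = 0 := by
  have W := empMove_swap_wf r hwf
  refine WellFounded.induction W.transGen
    (C := fun G => PPos (EmpMove r) G ↔
      (∀ i, PPos (r i) (G i)) ∧
        (List.ofFn fun i => Pl (r i) (hwf i) (G i)).foldr (· ^^^ ·) 0 = 0) G ?_
  clear G
  intro G ih
  constructor
  · intro hP
    by_contra hC
    obtain ⟨G', hm, hC'⟩ := emp_exists_step hwf hfin hC
    have hPP' : PPos (EmpMove r) G' :=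
      (ih G' (Relation.TransGen.single hm)).mpr hC'
    exact ((nPos_iff_not_pPos W G').mp (hP G' hm)) hPP'
  · rintro ⟨h1, h2⟩
    intro G' hm
    have hC' := emp_step_not_C hwf hfin h1 h2 hm
    obtain ⟨G'', hm2, hC''⟩ := emp_exists_step hwf hfin hC'
    have hPP'' : PPos (EmpMove r) G'' :=
      (ih G'' (Relation.TransGen.head hm2 (Relation.TransGen.single hm))).mpr hC''
    exact ⟨G', G'', hm2, hPP''⟩
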